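/- Suppose the BGK assumptions hold, that there exist λ₀ < 0 and a first eigenfunction u₀ : ℝ → ℝ which is C² with u₀(0) = u₀(P) = 0, u₀(x) > 0 for all x ∈ (0,P), and u₀''(x) + (q(x) + λ₀)u₀(x) = 0 for all x ∈ [0,P], and that condition (v) holds: ∫₀^{P/2} (q(x)+λ₀)(q(x)+(4/3)λ₀) u₀(x)⁴ dx < 0. Set ψ(x) := u₀(x)u₀'(x), and assume all integrals appearing in ℒ[ψ] converge absolutely. Then ℒ[ψ] = 2∫₀^{P/2} (q(x)+λ₀)(q(x)+(4/3)λ₀) u₀(x)⁴ dx < 0. -/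

import Mathlib

open MeasureTheory intervalIntegral

/-- Inner spatial integral over a full period for free particles of energy `e`. -/
noncomputable def freeInner (φ ψ : ℝ → ℝ) (P e : ℝ) : ℝ :=
  ∫ y in (0:ℝ)..P, ψ y / Real.sqrt (2 * (e - φ y))

/-- Period `P_f(e)` of a free particle with energy `e`. -/
noncomputable def Pfree (φ : ℝ → ℝ) (P e : ℝ) : ℝ :=
  ∫ y in (0:ℝ)..P, 1 / Real.sqrt (2 * (e - φ y))

/-- Inner spatial integral between turning points for trapped particles of energy `e`. -/
noncomputable def trapInner (φ ψ : ℝ → ℝ) (P : ℝ) (α : ℝ → ℝ) (e : ℝ) : ℝ :=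
  ∫ y in (α e)..(P - α e), ψ y / Real.sqrt (2 * (e - φ y))

/-- Period `P_t(e)` of a trapped particle with energy `e`. -/
noncomputable def Ptrap (φ : ℝ → ℝ) (P : ℝ) (α : ℝ → ℝ) (e : ℝ) : ℝ :=
  ∫ y in (α e)..(P - α e), 1 / Real.sqrt (2 * (e - φ y))

/-- Lin's instability functional `ℒ[ψ]`. -/
noncomputable def Lfunc (μ φ : ℝ → ℝ) (P : ℝ) (α : ℝ → ℝ) (ψ : ℝ → ℝ) : ℝ :=
  (∫ x in (0:ℝ)..P,
      ((deriv ψ x) ^ 2 - (∫ v : ℝ, deriv μ (v ^ 2 / 2 + φ x)) * (ψ x) ^ 2))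
  + (∫ e in Set.Ioi (φ 0), deriv μ e * (Pfree φ P e)⁻¹ * (freeInner φ ψ P e) ^ 2)
  + 2 * ∫ e in (φ (P / 2))..(φ 0),
      deriv μ e * (Ptrap φ P α e)⁻¹ * (trapInner φ ψ P α e) ^ 2

/-- **Evaluation of the instability functional at the test function `ψ = u₀u₀'`.**
Under the BGK assumptions, with `u₀` the first Dirichlet eigenfunction (eigenvalue
`λ₀ < 0`) of `u'' + (q+λ)u = 0` on `(0,P)`, and assuming condition (v), the test function
`ψ = u₀u₀'` satisfies `ℒ[ψ] = 2∫₀^{P/2} (q+λ₀)(q+(4/3)λ₀)u₀⁴ dx < 0`. -/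
theorem Lfunc_eval_at_test_function
    (μ φ : ℝ → ℝ) (P : ℝ) (hP : 0 < P)
    -- BGK assumptions
    (hμC1 : ContDiff ℝ 1 μ) (hμnonneg : ∀ y, 0 ≤ μ y)
    (hdecay : ∃ C > (0:ℝ), ∃ γ > (1:ℝ), ∀ y, |deriv μ y| ≤ C / (1 + |y| ^ γ))
    (hφC2 : ContDiff ℝ 2 φ)
    (hφper : ∀ x, φ (x + P) = φ x)
    (hφsym : ∀ x ∈ Set.Icc 0 P, φ (P - x) = φ x)
    (hφanti : StrictAntiOn φ (Set.Icc 0 (P / 2)))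
    (hφmax : ∀ x, φ x ≤ φ 0)
    (hφmin : ∀ x, φ (P / 2) ≤ φ x)
    (hμint : ∀ x, Integrable (fun v : ℝ => μ (v ^ 2 / 2 + φ x)))
    (hpoisson : ∀ x, deriv (deriv φ) x = 1 - ∫ v : ℝ, μ (v ^ 2 / 2 + φ x))
    -- the Sturm–Liouville potential q
    (q : ℝ → ℝ) (hq : ∀ x, q x = ∫ v : ℝ, deriv μ (v ^ 2 / 2 + φ x))
    -- the turning-point function α
    (α : ℝ → ℝ)
    (hα : ∀ e ∈ Set.Ioo (φ (P / 2)) (φ 0), α e ∈ Set.Icc 0 (P / 2) ∧ φ (α e) = e)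
    -- first eigenvalue and eigenfunction
    (lam₀ : ℝ) (hlam₀ : lam₀ < 0)
    (u₀ : ℝ → ℝ) (hu₀C2 : ContDiff ℝ 2 u₀)
    (hu₀0 : u₀ 0 = 0) (hu₀P : u₀ P = 0)
    (hu₀pos : ∀ x ∈ Set.Ioo 0 P, 0 < u₀ x)
    (hode : ∀ x ∈ Set.Icc 0 P, deriv (deriv u₀) x + (q x + lam₀) * u₀ x = 0)
    -- condition (v)
    (hcond : (∫ x in (0:ℝ)..(P / 2),
        (q x + lam₀) * (q x + (4 / 3) * lam₀) * (u₀ x) ^ 4) < 0)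
    -- the test function ψ = u₀ u₀'
    (ψ : ℝ → ℝ) (hψ : ψ = fun x => u₀ x * deriv u₀ x)
    -- absolute convergence of all integrals appearing in ℒ[ψ]
    (hI1 : IntervalIntegrable
      (fun x => (deriv ψ x) ^ 2 - (∫ v : ℝ, deriv μ (v ^ 2 / 2 + φ x)) * (ψ x) ^ 2)
      volume 0 P)
    (hI2 : IntegrableOn
      (fun e => deriv μ e * (Pfree φ P e)⁻¹ * (freeInner φ ψ P e) ^ 2) (Set.Ioi (φ 0)))
    (hI3 : IntervalIntegrable
      (fun e => deriv μ e * (Ptrap φ P α e)⁻¹ * (trapInner φ ψ P α e) ^ 2)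
      volume (φ (P / 2)) (φ 0))
    (hI4 : ∀ e, φ 0 < e →
      IntervalIntegrable (fun y => ψ y / Real.sqrt (2 * (e - φ y))) volume 0 P ∧
      IntervalIntegrable (fun y => 1 / Real.sqrt (2 * (e - φ y))) volume 0 P)
    (hI5 : ∀ e ∈ Set.Ioo (φ (P / 2)) (φ 0),
      IntervalIntegrable (fun y => ψ y / Real.sqrt (2 * (e - φ y)))
        volume (α e) (P - α e) ∧
      IntervalIntegrable (fun y => 1 / Real.sqrt (2 * (e - φ y)))
        volume (α e) (P - α e)) :
    Lfunc μ φ P α ψ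
      = 2 * ∫ x in (0:ℝ)..(P / 2),
          (q x + lam₀) * (q x + (4 / 3) * lam₀) * (u₀ x) ^ 4 ∧
    Lfunc μ φ P α ψ < 0 := by
  
  subst hψ
  have hP2 : (0:ℝ) < P / 2 := by linarith
  have hdu : Differentiable ℝ u₀ := hu₀C2.differentiable (by norm_num)
  have hu1 : ContDiff ℝ 1 (deriv u₀) := by
    have h2 : ContDiff ℝ ((1:ℕ) + 1) u₀ := by exact_mod_cast hu₀C2
    exact ((contDiff_succ_iff_deriv).mp h2).2.2
  have hdb : Differentiable ℝ (deriv u₀) := hu1.differentiable one_ne_zero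
  have hcc : Continuous (deriv (deriv u₀)) := hu1.continuous_deriv le_rfl
  -- q symmetric
  have hqsym : ∀ x ∈ Set.Icc (0:ℝ) P, q (P - x) = q x := by
    intro x hx
    rw [hq, hq]
    simp only [hφsym x hx]
  -- derivative helpers
  have hsub : ∀ x : ℝ, HasDerivAt (fun y : ℝ => P - y) (-1) x := by
    intro x
    simpa using ((hasDerivAt_id x).const_sub P)
  have hus : ∀ x : ℝ, HasDerivAt (fun y => u₀ (P - y)) (-(deriv u₀ (P - x))) x := by
    intro x
    have h := (hdu (P - x)).hasDerivAt.comp x (hsub x)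
    rw [mul_neg_one] at h
    exact h
  have hbs : ∀ x : ℝ, HasDerivAt (fun y => deriv u₀ (P - y))
      (-(deriv (deriv u₀) (P - x))) x := by
    intro x
    have h := (hdb (P - x)).hasDerivAt.comp x (hsub x)
    rw [mul_neg_one] at h
    exact h
  -- the Wronskian
  set W : ℝ → ℝ := fun x => u₀ x * (-(deriv u₀ (P - x))) - deriv u₀ x * u₀ (P - x) with hW
  have hWd : ∀ x : ℝ, HasDerivAt W
      (u₀ x * (deriv (deriv u₀) (P - x)) - deriv (deriv u₀) x * u₀ (P - x)) x := by
    intro x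
    have h1 := ((hdu x).hasDerivAt.mul (hbs x).neg).sub
      (((hdb x).hasDerivAt).mul (hus x))
    refine h1.congr_deriv ?_
    simp only [Pi.neg_apply]
    ring
  have hW0 : ∀ x ∈ Set.Icc (0:ℝ) P, W x = 0 := by
    have hconst := constant_of_has_deriv_right_zero (f := W) (a := 0) (b := P)
      (HasDerivAt.continuousOn (fun x _ => hWd x))
      (by
        intro x hx
        have hx' : x ∈ Set.Icc (0:ℝ) P := Set.Ico_subset_Icc_self hx
        have hPx : P - x ∈ Set.Icc (0:ℝ) P := by
          constructor <;> [linarith [hx'.2]; linarith [hx'.1]]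
        have h1 : deriv (deriv u₀) x = -((q x + lam₀) * u₀ x) := by
          linarith [hode x hx']
        have h2 : deriv (deriv u₀) (P - x) = -((q x + lam₀) * u₀ (P - x)) := by
          have := hode (P - x) hPx
          rw [hqsym x hx'] at this
          linarith
        have : HasDerivAt W 0 x := by
          have := hWd x
          rw [h1, h2] at this
          convert this using 1
          ring
        exact this.hasDerivWithinAt)
    intro x hx
    have := hconst x hx
    rw [this, hW]
    simp [hu₀0, hu₀P]
  -- symmetry of u₀
  have usym : ∀ x ∈ Set.Icc (0:ℝ) P, u₀ (P - x) = u₀ x := by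
    intro x hx
    rcases eq_or_lt_of_le hx.1 with h0 | h0
    · rw [← h0]; simp [hu₀0, hu₀P]
    rcases eq_or_lt_of_le hx.2 with hPe | hPe
    · rw [hPe]; simp [hu₀0, hu₀P]
    have hhalf : P / 2 ∈ Set.Ioo (0:ℝ) P := by constructor <;> linarith
    set A := min x (P / 2) with hA
    set B := max x (P / 2) with hB
    have hAB : Set.Icc A B ⊆ Set.Ioo (0:ℝ) P := by
      intro y hy
      constructor
      · calc (0:ℝ) < A := lt_min h0 hhalf.1
          _ ≤ y := hy.1
      · calc y ≤ B := hy.2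
          _ < P := max_lt hPe hhalf.2
    set g : ℝ → ℝ := fun y => u₀ (P - y) * (u₀ y)⁻¹ with hg
    have hgc : ContinuousOn g (Set.Icc A B) := by
      apply ContinuousOn.mul
      · exact (hdu.continuous.comp (continuous_const.sub continuous_id)).continuousOn
      · exact ContinuousOn.inv₀ hdu.continuous.continuousOn
          (fun y hy => (hu₀pos y (hAB hy)).ne')
    have hgd : ∀ y ∈ Set.Ico A B, HasDerivWithinAt g 0 (Set.Ici y) y := by
      intro y hy
      have hy' : y ∈ Set.Ioo (0:ℝ) P := hAB (Set.Ico_subset_Icc_self hy)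
      have hy0 : u₀ y ≠ 0 := (hu₀pos y hy').ne'
      have hW0y : u₀ y * (-(deriv u₀ (P - y))) - deriv u₀ y * u₀ (P - y) = 0 :=
        hW0 y (Set.Ioo_subset_Icc_self hy')
      have h1 : HasDerivAt g
          ((-(deriv u₀ (P - y))) * (u₀ y)⁻¹
            + u₀ (P - y) * (-(deriv u₀ y) / u₀ y ^ 2)) y :=
        (hus y).mul ((hdu y).hasDerivAt.inv hy0)
      have hval : (-(deriv u₀ (P - y))) * (u₀ y)⁻¹
            + u₀ (P - y) * (-(deriv u₀ y) / u₀ y ^ 2) = 0 := by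
        field_simp
        linear_combination hW0y
      rw [hval] at h1
      exact h1.hasDerivWithinAt
    have hconst := constant_of_has_deriv_right_zero hgc hgd
    have hxmem : x ∈ Set.Icc A B := ⟨min_le_left _ _, le_max_left _ _⟩
    have hhmem : P / 2 ∈ Set.Icc A B := ⟨min_le_right _ _, le_max_right _ _⟩
    have hgx : g x = g (P / 2) := by rw [hconst x hxmem, hconst (P/2) hhmem]
    have hhv : g (P / 2) = 1 := by
      rw [hg]
      simp only
      rw [show P - P / 2 = P / 2 by ring]
      exact mul_inv_cancel₀ (hu₀pos _ hhalf).ne'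
    have hx0 : u₀ x ≠ 0 := (hu₀pos x ⟨h0, hPe⟩).ne'
    have : u₀ (P - x) * (u₀ x)⁻¹ = 1 := by rw [← hhv, ← hgx]
    field_simp at this
    exact this
  -- antisymmetry of deriv u₀
  have bsym : ∀ x ∈ Set.Ioo (0:ℝ) P, deriv u₀ (P - x) = -deriv u₀ x := by
    intro x hx
    have hev : (fun y => u₀ (P - y)) =ᶠ[nhds x] u₀ := by
      filter_upwards [Ioo_mem_nhds hx.1 hx.2] with y hy
      exact usym y (Set.Ioo_subset_Icc_self hy)
    have hde : deriv (fun y => u₀ (P - y)) x = deriv u₀ x := hev.deriv_eq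
    rw [(hus x).deriv] at hde
    linarith
  -- antisymmetry of ψ
  have psym : ∀ x ∈ Set.Icc (0:ℝ) P,
      u₀ (P - x) * deriv u₀ (P - x) = -(u₀ x * deriv u₀ x) := by
    intro x hx
    rcases eq_or_lt_of_le hx.1 with h0 | h0
    · rw [← h0]; simp [hu₀0, hu₀P]
    rcases eq_or_lt_of_le hx.2 with hPe | hPe
    · rw [hPe]; simp [hu₀0, hu₀P]
    rw [usym x hx, bsym x ⟨h0, hPe⟩]
    ring
  -- free inner integral vanishes
  have hfree : ∀ e : ℝ, freeInner φ (fun x => u₀ x * deriv u₀ x) P e = 0 := by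
    intro e
    set f : ℝ → ℝ := fun y => (u₀ y * deriv u₀ y) / Real.sqrt (2 * (e - φ y)) with hf
    have h1 : (∫ y in (0:ℝ)..P, f (P - y)) = ∫ y in (0:ℝ)..P, f y := by
      have := intervalIntegral.integral_comp_sub_left (a := 0) (b := P) f P
      simpa using this
    have h2 : Set.EqOn (fun y => f (P - y)) (fun y => -f y) (Set.uIcc 0 P) := by
      intro y hy
      rw [Set.uIcc_of_le hP.le] at hy
      simp only [hf]
      rw [hφsym y hy, psym y hy, neg_div]
    rw [intervalIntegral.integral_congr h2, intervalIntegral.integral_neg] at h1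
    have h3 : freeInner φ (fun x => u₀ x * deriv u₀ x) P e = ∫ y in (0:ℝ)..P, f y := rfl
    rw [h3]
    linarith
  -- trapped inner integral vanishes
  have htrap : ∀ e ∈ Set.Ioo (φ (P / 2)) (φ 0),
      trapInner φ (fun x => u₀ x * deriv u₀ x) P α e = 0 := by
    intro e he
    obtain ⟨hαe, -⟩ := hα e he
    set a := α e with ha
    have haP : a ≤ P - a := by
      have := hαe.2; linarith
    have hsubI : Set.uIcc a (P - a) ⊆ Set.Icc (0:ℝ) P := by
      rw [Set.uIcc_of_le haP]
      intro y hy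
      exact ⟨le_trans hαe.1 hy.1, by linarith [hy.2, hαe.1]⟩
    set f : ℝ → ℝ := fun y => (u₀ y * deriv u₀ y) / Real.sqrt (2 * (e - φ y)) with hf
    have h1 : (∫ y in a..(P - a), f (P - y)) = ∫ y in a..(P - a), f y := by
      have := intervalIntegral.integral_comp_sub_left (a := a) (b := P - a) f P
      rw [show P - (P - a) = a by ring, show P - a = P - a from rfl] at this
      exact this
    have h2 : Set.EqOn (fun y => f (P - y)) (fun y => -f y) (Set.uIcc a (P - a)) := by
      intro y hy
      have hy' : y ∈ Set.Icc (0:ℝ) P := hsubI hy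
      simp only [hf]
      rw [hφsym y hy', psym y hy', neg_div]
    rw [intervalIntegral.integral_congr h2, intervalIntegral.integral_neg] at h1
    have h3 : trapInner φ (fun x => u₀ x * deriv u₀ x) P α e
        = ∫ y in a..(P - a), f y := rfl
    rw [h3]
    linarith
  -- second term vanishes
  have hT2 : (∫ e in Set.Ioi (φ 0), deriv μ e * (Pfree φ P e)⁻¹ *
      freeInner φ (fun x => u₀ x * deriv u₀ x) P e ^ 2) = 0 := by
    simp only [hfree]
    simp
  -- third term vanishes
  have hT3 : (∫ e in (φ (P / 2))..(φ 0), deriv μ e * (Ptrap φ P α e)⁻¹ *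
      trapInner φ (fun x => u₀ x * deriv u₀ x) P α e ^ 2) = 0 := by
    have hle : φ (P / 2) ≤ φ 0 := hφmax _
    rw [intervalIntegral.integral_of_le hle, MeasureTheory.integral_Ioc_eq_integral_Ioo]
    rw [MeasureTheory.setIntegral_congr_fun measurableSet_Ioo
      (g := fun _ => (0:ℝ)) (fun e he => by rw [htrap e he]; ring)]
    simp
  -- first term: the main computation
  set G : ℝ → ℝ := fun x =>
    (deriv (deriv u₀) x) ^ 2 * (u₀ x) ^ 2
      - lam₀ / 3 * deriv (deriv u₀) x * (u₀ x) ^ 3 with hG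
  have hGc : Continuous G := by
    apply Continuous.sub
    · exact ((hcc.pow 2).mul (hdu.continuous.pow 2))
    · exact ((continuous_const.mul hcc).mul (hdu.continuous.pow 3))
  have hderivψ : ∀ x : ℝ, deriv (fun x => u₀ x * deriv u₀ x) x
      = deriv u₀ x * deriv u₀ x + u₀ x * deriv (deriv u₀) x := by
    intro x
    exact ((hdu x).hasDerivAt.mul (hdb x).hasDerivAt).deriv
  have hI1' : IntervalIntegrable
      (fun x => (deriv (fun x => u₀ x * deriv u₀ x) x) ^ 2
        - q x * (u₀ x * deriv u₀ x) ^ 2) volume 0 P := by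
    have heq : (fun x => (deriv (fun x => u₀ x * deriv u₀ x) x) ^ 2
        - q x * (u₀ x * deriv u₀ x) ^ 2)
        = (fun x => (deriv (fun x => u₀ x * deriv u₀ x) x) ^ 2
        - (∫ v : ℝ, deriv μ (v ^ 2 / 2 + φ x)) * (u₀ x * deriv u₀ x) ^ 2) := by
      funext x; rw [hq]
    rw [heq]
    exact hI1
  -- FTC with explicit antiderivative
  set F : ℝ → ℝ := fun x =>
    u₀ x * (deriv u₀ x) ^ 3 + lam₀ / 3 * (u₀ x) ^ 3 * deriv u₀ x with hF
  have hFTC : (∫ x in (0:ℝ)..P,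
      ((deriv (fun x => u₀ x * deriv u₀ x) x) ^ 2
        - q x * (u₀ x * deriv u₀ x) ^ 2 - G x)) = F P - F 0 := by
    apply intervalIntegral.integral_eq_sub_of_hasDerivAt
    · intro x hx
      rw [Set.uIcc_of_le hP.le] at hx
      have h1 : HasDerivAt F
          (deriv u₀ x * (deriv u₀ x) ^ 3
            + u₀ x * ((3:ℕ) * (deriv u₀ x) ^ 2 * deriv (deriv u₀) x)
            + (lam₀ / 3 * ((3:ℕ) * (u₀ x) ^ 2 * deriv u₀ x) * deriv u₀ x
              + lam₀ / 3 * (u₀ x) ^ 3 * deriv (deriv u₀) x)) x := by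
        apply HasDerivAt.add
        · exact (hdu x).hasDerivAt.mul ((hdb x).hasDerivAt.pow 3)
        · exact ((((hdu x).hasDerivAt.pow 3).const_mul (lam₀ / 3)).mul
            (hdb x).hasDerivAt)
      refine h1.congr_deriv ?_
      beta_reduce
      have hodex : deriv (deriv u₀) x = -((q x + lam₀) * u₀ x) := by
        linarith [hode x hx]
      rw [hderivψ x, hG]
      simp only
      rw [hodex]
      push_cast
      ring
    · exact hI1'.sub (hGc.intervalIntegrable 0 P)
  have hF0 : F P - F 0 = 0 := by
    rw [hF]; simp [hu₀0, hu₀P]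
  have hsplit : (∫ x in (0:ℝ)..P,
      ((deriv (fun x => u₀ x * deriv u₀ x) x) ^ 2
        - q x * (u₀ x * deriv u₀ x) ^ 2))
      = ∫ x in (0:ℝ)..P, G x := by
    have hsub3 := intervalIntegral.integral_sub hI1' (hGc.intervalIntegrable 0 P)
    have h2 := hFTC
    rw [hsub3, hF0] at h2
    linarith
  -- symmetry of G
  have hGsym : ∀ x ∈ Set.Icc (0:ℝ) P, G (P - x) = G x := by
    intro x hx
    have hPx : P - x ∈ Set.Icc (0:ℝ) P := by
      constructor <;> [linarith [hx.2]; linarith [hx.1]]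
    have hcsym : deriv (deriv u₀) (P - x) = deriv (deriv u₀) x := by
      have h1 := hode x hx
      have h2 := hode (P - x) hPx
      rw [hqsym x hx, usym x hx] at h2
      linarith
    rw [hG]
    simp only
    rw [hcsym, usym x hx]
  have hGhalf : (∫ x in (0:ℝ)..P, G x) = 2 * ∫ x in (0:ℝ)..(P / 2), G x := by
    have hsp : (∫ x in (0:ℝ)..(P/2), G x) + (∫ x in (P/2)..P, G x)
        = ∫ x in (0:ℝ)..P, G x :=
      intervalIntegral.integral_add_adjacent_intervals
        (hGc.intervalIntegrable 0 (P/2)) (hGc.intervalIntegrable (P/2) P)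
    have hsub2 : (∫ x in (0:ℝ)..(P/2), G (P - x)) = ∫ x in (P/2)..P, G x := by
      have := intervalIntegral.integral_comp_sub_left (a := 0) (b := P/2) G P
      rw [show P - P/2 = P/2 by ring, sub_zero] at this
      exact this
    have hcongr : (∫ x in (0:ℝ)..(P/2), G (P - x)) = ∫ x in (0:ℝ)..(P/2), G x := by
      apply intervalIntegral.integral_congr
      intro x hx
      rw [Set.uIcc_of_le hP2.le] at hx
      exact hGsym x ⟨hx.1, by linarith [hx.2]⟩
    rw [← hsp, ← hsub2, hcongr]
    ring
  have hGQ : (∫ x in (0:ℝ)..(P / 2), G x)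
      = ∫ x in (0:ℝ)..(P / 2), (q x + lam₀) * (q x + 4 / 3 * lam₀) * u₀ x ^ 4 := by
    apply intervalIntegral.integral_congr
    intro x hx
    rw [Set.uIcc_of_le hP2.le] at hx
    have hx' : x ∈ Set.Icc (0:ℝ) P := ⟨hx.1, by linarith [hx.2]⟩
    have hodex : deriv (deriv u₀) x = -((q x + lam₀) * u₀ x) := by
      linarith [hode x hx']
    rw [hG]
    simp only
    rw [hodex]
    ring
  -- assemble
  have hT1 : (∫ x in (0:ℝ)..P,
      ((deriv (fun x => u₀ x * deriv u₀ x) x) ^ 2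
        - (∫ v : ℝ, deriv μ (v ^ 2 / 2 + φ x)) * (u₀ x * deriv u₀ x) ^ 2))
      = 2 * ∫ x in (0:ℝ)..(P / 2),
          (q x + lam₀) * (q x + 4 / 3 * lam₀) * u₀ x ^ 4 := by
    have heq : (fun x => (deriv (fun x => u₀ x * deriv u₀ x) x) ^ 2
        - (∫ v : ℝ, deriv μ (v ^ 2 / 2 + φ x)) * (u₀ x * deriv u₀ x) ^ 2)
        = (fun x => (deriv (fun x => u₀ x * deriv u₀ x) x) ^ 2
        - q x * (u₀ x * deriv u₀ x) ^ 2) := by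
      funext x; rw [hq]
    rw [heq, hsplit, hGhalf, hGQ]
  constructor
  · rw [Lfunc, hT1, hT2, hT3]
    ring
  · rw [Lfunc, hT1, hT2, hT3]
    have h4 : (4:ℝ) / 3 * lam₀ = 4 / 3 * lam₀ := rfl
    nlinarith [hcond]
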